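/- arXiv:2512.06033 — 2 statements merged into one kernel-verified Lean document; each statement's English description precedes it below -/
import Mathlib

section
/- Let R : ℝ^d → ℝ be twice continuously differentiable, let θ̂ ∈ ℝ^d satisfy ∇R(θ̂) = 0, and suppose the Hessian H = ∇²R(θ̂) is positive definite. Let ℓ : ℝ^d → ℝ be twice continuously differentiable, let ε₀ > 0, and let θ : (-ε₀, ε₀) → ℝ^d be a continuously differentiable map with θ(0) = θ̂ satisfying ∇R(θ(ε)) + ε·∇ℓ(θ(ε)) = 0 for all ε ∈ (-ε₀, ε₀). Let ℓ_eval : ℝ^d → ℝ be continuously differentiable. If the influence -⟨∇ℓ_eval(θ̂), H⁻¹ ∇ℓ(θ̂)⟩ is strictly negative, then there exists ε₁ > 0 such that for all ε with 0 < ε < ε₁ one has ℓ_eval(θ(ε)) < ℓ_eval(θ̂); that is, upweighting the candidate point strictly decreases the evaluation loss for all sufficiently small positive perturbation weights. -/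
open scoped RealInnerProductSpace

open InnerProductSpace in
/-- The real dual equivalence as a `ContinuousLinearEquiv`. -/
noncomputable def realDualCLE (E : Type*) [NormedAddCommGroup E] [InnerProductSpace ℝ E]
    [CompleteSpace E] : StrongDual ℝ E ≃L[ℝ] E where
  toFun := (toDual ℝ E).symm
  invFun := toDual ℝ E
  map_add' x y := map_add _ x y
  map_smul' r x := by
    simp [map_smulₛₗ (toDual ℝ E).symm r x]
  left_inv x := by simp
  right_inv x := by simp
  continuous_toFun := (toDual ℝ E).symm.continuous
  continuous_invFun := (toDual ℝ E).continuous

lemma gradient_eq_realDualCLE {E : Type*} [NormedAddCommGroup E] [InnerProductSpace ℝ E]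
    [CompleteSpace E] (f : E → ℝ) :
    gradient f = fun x => realDualCLE E (fderiv ℝ f x) := rfl

/-- **A strictly negative influence score means the candidate point is beneficial.**
Under the setup of the influence lemma, if the influence
`-⟪∇ℓeval(θ̂), H⁻¹ ∇ℓ(θ̂)⟫` is strictly negative, then there exists `ε₁ > 0`
such that upweighting the candidate point with any weight `0 < ε < ε₁`
strictly decreases the evaluation loss: `ℓeval (θ ε) < ℓeval θ̂`. -/
theorem negative_influence_decreases_eval_loss
    (d : ℕ) (R ℓ ℓeval : EuclideanSpace ℝ (Fin d) → ℝ)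
    (hR : ContDiff ℝ 2 R) (hℓ : ContDiff ℝ 2 ℓ) (hℓeval : ContDiff ℝ 1 ℓeval)
    (θhat : EuclideanSpace ℝ (Fin d))
    (hcrit : gradient R θhat = 0)
    (hpos : ∀ v : EuclideanSpace ℝ (Fin d), v ≠ 0 →
      0 < ⟪(fderiv ℝ (gradient R) θhat) v, v⟫)
    (ε₀ : ℝ) (hε₀ : 0 < ε₀)
    (θ : ℝ → EuclideanSpace ℝ (Fin d))
    (hθ : ContDiffOn ℝ 1 θ (Set.Ioo (-ε₀) ε₀))
    (hθ0 : θ 0 = θhat)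
    (hopt : ∀ ε ∈ Set.Ioo (-ε₀) ε₀,
      gradient R (θ ε) + ε • gradient ℓ (θ ε) = 0)
    (hneg : -⟪gradient ℓeval θhat,
        (Ring.inverse (fderiv ℝ (gradient R) θhat)) (gradient ℓ θhat)⟫ < 0) :
    ∃ ε₁ > (0 : ℝ), ∀ ε : ℝ, 0 < ε → ε < ε₁ → ℓeval (θ ε) < ℓeval θhat := by
  set H : EuclideanSpace ℝ (Fin d) →L[ℝ] EuclideanSpace ℝ (Fin d) :=
    fderiv ℝ (gradient R) θhat with hH
  -- differentiability of gradients
  have hgradR : Differentiable ℝ (gradient R) := by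
    rw [gradient_eq_realDualCLE]
    exact (realDualCLE _).differentiable.comp
      ((hR.fderiv_right (m := 1) (by norm_num)).differentiable one_ne_zero)
  have hgradℓ : Differentiable ℝ (gradient ℓ) := by
    rw [gradient_eq_realDualCLE]
    exact (realDualCLE _).differentiable.comp
      ((hℓ.fderiv_right (m := 1) (by norm_num)).differentiable one_ne_zero)
  -- θ differentiable at 0
  have h0mem : (0:ℝ) ∈ Set.Ioo (-ε₀) ε₀ := ⟨by linarith, hε₀⟩
  have hnhds : Set.Ioo (-ε₀) ε₀ ∈ nhds (0:ℝ) := isOpen_Ioo.mem_nhds h0mem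
  have hθdiff : DifferentiableAt ℝ θ 0 :=
    (((hθ.differentiableOn one_ne_zero) 0 h0mem).differentiableAt hnhds)
  set v : EuclideanSpace ℝ (Fin d) := deriv θ 0 with hvdef
  have hv : HasDerivAt θ v 0 := hθdiff.hasDerivAt
  -- derivative of the optimality equation at 0
  have h1 : HasDerivAt (fun ε => gradient R (θ ε)) (H v) 0 := by
    have hR' : HasFDerivAt (gradient R) H (θ 0) := by
      rw [hθ0]; exact (hgradR θhat).hasFDerivAt
    exact hR'.comp_hasDerivAt 0 hv
  have h2 : HasDerivAt (fun ε => gradient ℓ (θ ε)) (fderiv ℝ (gradient ℓ) θhat v) 0 := by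
    have hℓ' : HasFDerivAt (gradient ℓ) (fderiv ℝ (gradient ℓ) θhat) (θ 0) := by
      rw [hθ0]; exact (hgradℓ θhat).hasFDerivAt
    exact hℓ'.comp_hasDerivAt 0 hv
  have h3 : HasDerivAt (fun ε : ℝ => ε • gradient ℓ (θ ε)) (gradient ℓ θhat) 0 := by
    have := (hasDerivAt_id (0:ℝ)).smul h2
    simp only [id, id_eq, hθ0, zero_smul, one_smul, zero_add] at this
    exact this
  have hF : HasDerivAt (fun ε : ℝ => gradient R (θ ε) + ε • gradient ℓ (θ ε))
      (H v + gradient ℓ θhat) 0 := h1.add h3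
  have hF0 : HasDerivAt (fun ε : ℝ => gradient R (θ ε) + ε • gradient ℓ (θ ε))
      (0 : EuclideanSpace ℝ (Fin d)) 0 := by
    have heq : (fun ε : ℝ => gradient R (θ ε) + ε • gradient ℓ (θ ε))
        =ᶠ[nhds (0:ℝ)] fun _ => (0 : EuclideanSpace ℝ (Fin d)) :=
      Filter.eventually_of_mem hnhds hopt
    exact (hasDerivAt_const _ _).congr_of_eventuallyEq heq
  have hkey : H v + gradient ℓ θhat = 0 := hF.unique hF0
  -- H is invertible
  have hinj : Function.Injective H := by
    intro a b hab
    by_contra hne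
    have h := hpos (a - b) (sub_ne_zero.mpr hne)
    rw [map_sub, hab, sub_self] at h
    simp at h
  have hsurj : Function.Surjective (H : EuclideanSpace ℝ (Fin d) →ₗ[ℝ] EuclideanSpace ℝ (Fin d)) :=
    (LinearMap.injective_iff_surjective).mp hinj
  let eL := LinearEquiv.ofBijective (H : EuclideanSpace ℝ (Fin d) →ₗ[ℝ] EuclideanSpace ℝ (Fin d)) ⟨hinj, hsurj⟩
  let e := eL.toContinuousLinearEquiv
  have hHe : (e : EuclideanSpace ℝ (Fin d) →L[ℝ] EuclideanSpace ℝ (Fin d)) = H := by ext x; rfl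
  have hInv : Ring.inverse H = ((e.toUnit)⁻¹ : (EuclideanSpace ℝ (Fin d) →L[ℝ] EuclideanSpace ℝ (Fin d))ˣ) := by
    have : (e.toUnit : EuclideanSpace ℝ (Fin d) →L[ℝ] EuclideanSpace ℝ (Fin d)) = H := hHe
    rw [← this, Ring.inverse_unit]
  have hvval : v = -(Ring.inverse H) (gradient ℓ θhat) := by
    have h4 : gradient ℓ θhat = e (-v) := by
      have : gradient ℓ θhat = -(H v) := by
        rw [eq_neg_iff_add_eq_zero, add_comm]; exact hkey
      rw [this, map_neg]
      rfl
    rw [hInv]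
    show v = -(e.symm : EuclideanSpace ℝ (Fin d) →L[ℝ] EuclideanSpace ℝ (Fin d)) (gradient ℓ θhat)
    rw [h4]
    simp
  -- derivative of the evaluation loss
  have hge : HasFDerivAt ℓeval
      (InnerProductSpace.toDual ℝ (EuclideanSpace ℝ (Fin d)) (gradient ℓeval θhat)) θhat :=
    ((hℓeval.differentiable one_ne_zero) θhat).hasGradientAt.hasFDerivAt
  have hg : HasDerivAt (fun ε => ℓeval (θ ε)) ⟪gradient ℓeval θhat, v⟫ 0 := by
    have hge' : HasFDerivAt ℓeval
        (InnerProductSpace.toDual ℝ (EuclideanSpace ℝ (Fin d)) (gradient ℓeval θhat)) (θ 0) := by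
      rw [hθ0]; exact hge
    have := hge'.comp_hasDerivAt 0 hv
    simpa [InnerProductSpace.toDual_apply_apply, Function.comp_def] using this
  have hc : ⟪gradient ℓeval θhat, v⟫ < 0 := by
    rw [hvval, inner_neg_right]
    exact hneg
  -- conclude
  rw [hasDerivAt_iff_tendsto_slope] at hg
  have hev : ∀ᶠ ε in nhdsWithin (0:ℝ) {(0:ℝ)}ᶜ,
      slope (fun ε => ℓeval (θ ε)) 0 ε < 0 := hg.eventually_lt_const hc
  have hev' : ∀ᶠ ε in nhdsWithin (0:ℝ) (Set.Ioi 0),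
      slope (fun ε => ℓeval (θ ε)) 0 ε < 0 :=
    hev.filter_mono (nhdsWithin_mono 0 (fun x hx => ne_of_gt hx))
  obtain ⟨u, hu, hsub⟩ := mem_nhdsGT_iff_exists_Ioo_subset.mp hev'
  refine ⟨u, hu, fun ε hε1 hε2 => ?_⟩
  have hs := hsub ⟨hε1, hε2⟩
  simp only [Set.mem_setOf_eq, slope_def_field, sub_zero] at hs
  have := (div_neg_iff).mp hs
  rcases this with ⟨_, h⟩ | ⟨h, _⟩
  · linarith
  · rw [hθ0] at h; linarith
end

section
/- Let t = 2^m for some natural number m, and let a, b : ZMod t → ℝ be real vectors indexed by the cyclic group of order t. Define c₀ : ZMod t → ℝ by c₀(i) = a(i)·b(i) (slotwise product), and inductively c_{k+1}(i) = c_k(i) + c_k(i + 2^k) for 0 ≤ k < m (addition of a cyclic rotation by 2^k slots). Then after m steps, every slot of c_m contains the full inner product: for all i ∈ ZMod t, c_m(i) = Σ_{j ∈ ZMod t} a(j)·b(j). -/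
/-- **Correctness of the RotateAndSum procedure.**
Let `t = 2^m` and let `a b : ZMod t → ℝ`. Starting from the slotwise product
`c 0 i = a i * b i`, and inductively adding a cyclic rotation by `2^k` slots,
`c (k+1) i = c k i + c k (i + 2^k)` for `k < m`, every slot of `c m` contains
the full inner product `∑ j, a j * b j`. -/
theorem rotate_and_sum_correct
    (m : ℕ) (a b : ZMod (2 ^ m) → ℝ)
    (c : ℕ → ZMod (2 ^ m) → ℝ)
    (h0 : ∀ i, c 0 i = a i * b i)
    (hstep : ∀ k, k < m → ∀ i : ZMod (2 ^ m),
      c (k + 1) i = c k i + c k (i + ((2 ^ k : ℕ) : ZMod (2 ^ m)))) :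
    ∀ i : ZMod (2 ^ m), c m i = ∑ j : ZMod (2 ^ m), a j * b j := by
  have key : ∀ k, k ≤ m → ∀ i : ZMod (2 ^ m),
      c k i = ∑ j ∈ Finset.range (2 ^ k), c 0 (i + (j : ZMod (2 ^ m))) := by
    intro k
    induction k with
    | zero => intro _ i; simp
    | succ k ih =>
      intro hk i
      have hk' : k ≤ m := Nat.le_of_succ_le hk
      rw [hstep k hk i, ih hk' i, ih hk' (i + ((2 ^ k : ℕ) : ZMod (2 ^ m)))]
      rw [pow_succ, mul_two, Finset.sum_range_add]
      congr 1
      apply Finset.sum_congr rfl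
      intro j _
      congr 1
      push_cast
      ring
  intro i
  haveI : NeZero (2 ^ m) := ⟨(pow_pos (by norm_num : (0:ℕ) < 2) m).ne'⟩
  rw [key m le_rfl i]
  have : ∑ j ∈ Finset.range (2 ^ m), c 0 (i + (j : ZMod (2 ^ m)))
      = ∑ x : ZMod (2 ^ m), c 0 x := by
    refine Finset.sum_nbij' (fun j => i + (j : ZMod (2 ^ m)))
      (fun x => (x - i).val) ?_ ?_ ?_ ?_ ?_
    · intro j _; exact Finset.mem_univ _
    · intro x _; exact Finset.mem_range.mpr (ZMod.val_lt _)
    · intro j hj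
      simp only [add_sub_cancel_left]
      exact ZMod.val_natCast_of_lt (Finset.mem_range.mp hj)
    · intro x _; simp [ZMod.natCast_val, ZMod.cast_id]
    · intro j _; rfl
  rw [this]
  exact Finset.sum_congr rfl fun x _ => h0 x
end
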